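/- Both squared frequencies ν_fast² and ν_slow² of the double pendulum are strictly positive for m1, m2, l1, l2, g > 0. -/
import Mathlib

open Real

theorem freq_squared_pos
    (m1 m2 l1 l2 g : ℝ) (hm1 : 0 < m1) (hm2 : 0 < m2)
    (hl1 : 0 < l1) (hl2 : 0 < l2) (hg : 0 < g) :
    0 < g * (m1 + m2) / (8 * Real.pi ^ 2 * m1 * l1 * l2) *
        ((l1 + l2) + Real.sqrt ((l1 + l2) ^ 2 - 4 * m1 * l1 * l2 / (m1 + m2))) ∧
    0 < g * (m1 + m2) / (8 * Real.pi ^ 2 * m1 * l1 * l2) *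
        ((l1 + l2) - Real.sqrt ((l1 + l2) ^ 2 - 4 * m1 * l1 * l2 / (m1 + m2))) := by
  have hpi := Real.pi_pos
  have hc : 0 < g * (m1 + m2) / (8 * Real.pi ^ 2 * m1 * l1 * l2) := by positivity
  have hsum : 0 < l1 + l2 := by linarith
  have hlt : Real.sqrt ((l1 + l2) ^ 2 - 4 * m1 * l1 * l2 / (m1 + m2)) < l1 + l2 := by
    rw [Real.sqrt_lt' hsum]
    have : 0 < 4 * m1 * l1 * l2 / (m1 + m2) := by positivity
    linarith
  have hnn : 0 ≤ Real.sqrt ((l1 + l2) ^ 2 - 4 * m1 * l1 * l2 / (m1 + m2)) :=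
    Real.sqrt_nonneg _
  constructor <;> apply mul_pos hc <;> linarith
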